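/- If W ∈ S^{n×n} is an upper triangular unimodular matrix over S = F(t)[D;δ] with all diagonal entries equal to 1, and W·H is again in Hermite form for a matrix H in Hermite form with full row rank, then W = I_n. -/

import Mathlib

/-- Abstract presentation of a skew (Ore/differential) polynomial ring `S = K[D; δ]`:
`S` is a ring containing `K` via `ι`, with a distinguished element `D` satisfying the
commutation rule `D * a = a * D + δ a`, and every element of `S` is (uniquely) a finite
sum `∑ aₙ Dⁿ`, with coefficients `coeff` supported on `supp`. -/
structure DiffPolyRing (K : Type) [CommRing K] (S : Type) [Ring S] (δ : K → K) where
  ι : K →+* S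
  D : S
  comm_rule : ∀ a : K, D * ι a = ι a * D + ι (δ a)
  coeff : S → ℕ → K
  supp : S → Finset ℕ
  mem_supp : ∀ f n, n ∈ supp f ↔ coeff f n ≠ 0
  coeff_add : ∀ f g n, coeff (f + g) n = coeff f n + coeff g n
  coeff_ext : ∀ f g : S, (∀ n, coeff f n = coeff g n) → f = g
  coeff_monomial : ∀ (a : K) (i n : ℕ), coeff (ι a * D ^ i) n = if n = i then a else 0
  repr_sum : ∀ f : S, f = ∑ n ∈ supp f, ι (coeff f n) * D ^ n

namespace DiffPolyRing

variable {K S : Type} [CommRing K] [Ring S] {δ : K → K}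

/-- Degree in the variable `D`, with `degD 0 = ⊥` (i.e. `-∞`). -/
noncomputable def degD (R : DiffPolyRing K S δ) (f : S) : WithBot ℕ := (R.supp f).max

/-- Degree in `D` as a natural number (`0` for the zero polynomial). -/
noncomputable def natDegD (R : DiffPolyRing K S δ) (f : S) : ℕ := WithBot.unbotD 0 (R.degD f)

/-- `f` is monic: its leading coefficient (in `D`) is `1`. -/
noncomputable def Monic (R : DiffPolyRing K S δ) (f : S) : Prop :=
  R.coeff f (R.natDegD f) = 1

/-- `H` is in Hermite form: upper triangular, monic diagonal entries, and each
off-diagonal entry has `D`-degree strictly less than the diagonal entry below it. -/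
noncomputable def HermiteForm (R : DiffPolyRing K S δ) {n : ℕ}
    (H : Matrix (Fin n) (Fin n) S) : Prop :=
  (∀ i j, j < i → H i j = 0) ∧ (∀ i, R.Monic (H i i)) ∧
    (∀ i j, i < j → R.degD (H i j) < R.degD (H j j))

/-- The rows of `A` are left `S`-linearly independent. -/
def FullRowRank {n : ℕ} (A : Matrix (Fin n) (Fin n) S) : Prop :=
  ∀ c : Fin n → S, (∀ j, (∑ i, c i * A i j) = 0) → c = 0

end DiffPolyRing


namespace DiffPolyRing

variable {K S : Type} [CommRing K] [Ring S] {δ : K → K} (R : DiffPolyRing K S δ)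

lemma coeff_zero' (n : ℕ) : R.coeff 0 n = 0 := by
  have h := R.coeff_add 0 0 n
  rw [add_zero] at h
  exact (left_eq_add.mp h)

lemma coeff_neg' (f : S) (n : ℕ) : R.coeff (-f) n = - R.coeff f n := by
  have h := R.coeff_add f (-f) n
  rw [add_neg_cancel, R.coeff_zero'] at h
  exact eq_neg_of_add_eq_zero_right h.symm

lemma coeff_sum' {α : Type*} (s : Finset α) (f : α → S) (n : ℕ) :
    R.coeff (∑ i ∈ s, f i) n = ∑ i ∈ s, R.coeff (f i) n := by
  classical
  induction s using Finset.induction with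
  | empty => simp [R.coeff_zero']
  | insert _ _ h ih => rw [Finset.sum_insert h, Finset.sum_insert h, R.coeff_add, ih]

lemma eq_zero_of_supp_eq_empty {f : S} (h : R.supp f = ∅) : f = 0 := by
  have hr := R.repr_sum f
  rw [h, Finset.sum_empty] at hr
  exact hr

lemma degD_eq_natDegD {f : S} (hf : f ≠ 0) : R.degD f = (R.natDegD f : WithBot ℕ) := by
  have hne : (R.supp f).Nonempty :=
    Finset.nonempty_iff_ne_empty.mpr (fun h => hf (R.eq_zero_of_supp_eq_empty h))
  obtain ⟨M, hM⟩ := Finset.max_of_nonempty hne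
  have h2 : R.natDegD f = M := by
    unfold natDegD degD
    rw [hM]
    rfl
  show (R.supp f).max = _
  rw [hM, h2]
  rfl

lemma natDegD_mem_supp {f : S} (hf : f ≠ 0) : R.natDegD f ∈ R.supp f := by
  have h := R.degD_eq_natDegD hf
  exact Finset.mem_of_max h

lemma le_natDegD_of_mem_supp {f : S} {n : ℕ} (h : n ∈ R.supp f) : n ≤ R.natDegD f := by
  have hf : f ≠ 0 := by
    rintro rfl
    exact ((R.mem_supp 0 n).mp h) (R.coeff_zero' n)
  have h1 : (n : WithBot ℕ) ≤ R.degD f := Finset.le_max h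
  rw [R.degD_eq_natDegD hf] at h1
  exact_mod_cast h1

lemma coeff_eq_zero_of_not_mem {f : S} {n : ℕ} (h : n ∉ R.supp f) : R.coeff f n = 0 := by
  by_contra hc
  exact h ((R.mem_supp f n).mpr hc)

lemma coeff_mul_D (f : S) (m : ℕ) :
    R.coeff (f * R.D) m = if m = 0 then 0 else R.coeff f (m - 1) := by
  classical
  conv_lhs => rw [R.repr_sum f]
  rw [Finset.sum_mul]
  have h1 : ∀ k ∈ R.supp f, R.ι (R.coeff f k) * R.D ^ k * R.D
      = R.ι (R.coeff f k) * R.D ^ (k + 1) := by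
    intro k _; rw [mul_assoc, ← pow_succ]
  rw [Finset.sum_congr rfl h1, R.coeff_sum']
  simp only [R.coeff_monomial]
  rcases Nat.eq_zero_or_pos m with rfl | hm
  · simp
  · rw [if_neg (by omega)]
    have h2 : ∀ k ∈ R.supp f,
        (if m = k + 1 then R.coeff f k else 0) = (if k = m - 1 then R.coeff f k else 0) := by
      intro k _
      have : (m = k + 1) ↔ (k = m - 1) := by omega
      simp [this]
    rw [Finset.sum_congr rfl h2, Finset.sum_ite_eq']
    by_cases hs : m - 1 ∈ R.supp f
    · rw [if_pos hs]
    · rw [if_neg hs, R.coeff_eq_zero_of_not_mem hs]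

lemma coeff_mul_D_pow (f : S) (k m : ℕ) :
    R.coeff (f * R.D ^ k) m = if k ≤ m then R.coeff f (m - k) else 0 := by
  induction k generalizing m with
  | zero => simp
  | succ k ih =>
    rw [pow_succ, ← mul_assoc, R.coeff_mul_D]
    rcases Nat.eq_zero_or_pos m with rfl | hm
    · rw [if_pos rfl, if_neg (by omega)]
    · rw [if_neg (by omega), ih]
      by_cases h : k + 1 ≤ m
      · rw [if_pos (by omega), if_pos h]
        congr 1
        omega
      · rw [if_neg (by omega), if_neg h]

lemma coeff_iota_mul (a : K) (f : S) (n : ℕ) :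
    R.coeff (R.ι a * f) n = a * R.coeff f n := by
  classical
  conv_lhs => rw [R.repr_sum f]
  rw [Finset.mul_sum]
  have h1 : ∀ k ∈ R.supp f, R.ι a * (R.ι (R.coeff f k) * R.D ^ k)
      = R.ι (a * R.coeff f k) * R.D ^ k := by
    intro k _; rw [← mul_assoc, ← map_mul]
  rw [Finset.sum_congr rfl h1, R.coeff_sum']
  simp only [R.coeff_monomial]
  rw [Finset.sum_ite_eq]
  by_cases hs : n ∈ R.supp f
  · rw [if_pos hs]
  · rw [if_neg hs, R.coeff_eq_zero_of_not_mem hs, mul_zero]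

lemma coeff_D_pow_iota (n : ℕ) (a : K) {m : ℕ} (hm : n ≤ m) :
    R.coeff (R.D ^ n * R.ι a) m = if m = n then a else 0 := by
  induction n generalizing a m with
  | zero =>
    rw [pow_zero, one_mul]
    have h := R.coeff_monomial a 0 m
    rwa [pow_zero, mul_one] at h
  | succ n ih =>
    have hrw : R.D ^ (n + 1) * R.ι a
        = (R.D ^ n * R.ι a) * R.D + R.D ^ n * R.ι (δ a) := by
      rw [pow_succ, mul_assoc, R.comm_rule a, mul_add, ← mul_assoc]
    rw [hrw, R.coeff_add, R.coeff_mul_D, if_neg (show ¬ m = 0 by omega),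
      ih a (m := m - 1) (by omega), ih (δ a) (m := m) (by omega),
      if_neg (show ¬ m = n by omega), add_zero]
    have h3 : (m - 1 = n) ↔ (m = n + 1) := by omega
    simp [h3]

lemma coeff_D_pow_mul (n : ℕ) (g : S) {m : ℕ} (hm : n + R.natDegD g ≤ m) :
    R.coeff (R.D ^ n * g) m
      = if m = n + R.natDegD g then R.coeff g (R.natDegD g) else 0 := by
  classical
  conv_lhs => rw [R.repr_sum g]
  rw [Finset.mul_sum]
  have h2 : ∀ k ∈ R.supp g,
      R.coeff (R.D ^ n * (R.ι (R.coeff g k) * R.D ^ k)) m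
        = if k = m - n then R.coeff g k else 0 := by
    intro k hk
    have hk' : k ≤ R.natDegD g := R.le_natDegD_of_mem_supp hk
    rw [← mul_assoc, R.coeff_mul_D_pow, if_pos (by omega),
      R.coeff_D_pow_iota _ _ (by omega)]
    have : (m - k = n) ↔ (k = m - n) := by omega
    simp [this]
  rw [R.coeff_sum', Finset.sum_congr rfl h2, Finset.sum_ite_eq']
  by_cases hd : m = n + R.natDegD g
  · rw [if_pos hd]
    have he : m - n = R.natDegD g := by omega
    rw [he]
    by_cases hs : R.natDegD g ∈ R.supp g
    · rw [if_pos hs]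
    · rw [if_neg hs, R.coeff_eq_zero_of_not_mem hs]
  · rw [if_neg hd, if_neg]
    intro hs
    have := R.le_natDegD_of_mem_supp hs
    omega

lemma coeff_mul_natDegD' (f g : S) (m : ℕ) (hm : m = R.natDegD f + R.natDegD g) :
    R.coeff (f * g) m
      = R.coeff f (R.natDegD f) * R.coeff g (R.natDegD g) := by
  classical
  conv_lhs => rw [R.repr_sum f]
  rw [Finset.sum_mul]
  have h2 : ∀ k ∈ R.supp f,
      R.coeff (R.ι (R.coeff f k) * R.D ^ k * g) m
        = if k = R.natDegD f then R.coeff f k * R.coeff g (R.natDegD g) else 0 := by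
    intro k hk
    have hk' : k ≤ R.natDegD f := R.le_natDegD_of_mem_supp hk
    rw [mul_assoc, R.coeff_iota_mul, R.coeff_D_pow_mul _ _ (by omega)]
    by_cases h : k = R.natDegD f
    · rw [if_pos (by omega), if_pos h, h]
    · rw [if_neg (by omega), if_neg h, mul_zero]
  rw [R.coeff_sum', Finset.sum_congr rfl h2, Finset.sum_ite_eq']
  by_cases hs : R.natDegD f ∈ R.supp f
  · rw [if_pos hs]
  · rw [if_neg hs, R.coeff_eq_zero_of_not_mem hs, zero_mul]

lemma coeff_mul_natDegD (f g : S) :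
    R.coeff (f * g) (R.natDegD f + R.natDegD g)
      = R.coeff f (R.natDegD f) * R.coeff g (R.natDegD g) :=
  R.coeff_mul_natDegD' f g _ rfl

lemma degD_le_degD_mul_of_monic [Nontrivial K] {f g : S} (hf : f ≠ 0) (hg : R.Monic g) :
    R.degD g ≤ R.degD (f * g) := by
  have hlc : R.coeff f (R.natDegD f) ≠ 0 := (R.mem_supp f _).mp (R.natDegD_mem_supp hf)
  have hg1 : R.coeff g (R.natDegD g) = 1 := hg
  have htop : R.coeff (f * g) (R.natDegD f + R.natDegD g) ≠ 0 := by
    rw [R.coeff_mul_natDegD, hg1, mul_one]; exact hlc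
  have hmem : R.natDegD f + R.natDegD g ∈ R.supp (f * g) := (R.mem_supp _ _).mpr htop
  have hg0 : g ≠ 0 := by
    rintro rfl
    rw [R.coeff_zero'] at hg1
    exact one_ne_zero hg1.symm
  rw [R.degD_eq_natDegD hg0]
  calc (R.natDegD g : WithBot ℕ)
      ≤ ((R.natDegD f + R.natDegD g : ℕ) : WithBot ℕ) := by
        exact_mod_cast Nat.le_add_left _ _
    _ ≤ R.degD (f * g) := Finset.le_max hmem

lemma degD_add_le' (f g : S) : R.degD (f + g) ≤ max (R.degD f) (R.degD g) := by
  have hsub : R.supp (f + g) ⊆ R.supp f ∪ R.supp g := by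
    intro m hm
    rw [Finset.mem_union, R.mem_supp, R.mem_supp]
    by_contra h
    push_neg at h
    have hne := (R.mem_supp _ m).mp hm
    rw [R.coeff_add, h.1, h.2, add_zero] at hne
    exact hne rfl
  calc R.degD (f + g) ≤ (R.supp f ∪ R.supp g).max := Finset.max_mono hsub
    _ = max (R.degD f) (R.degD g) := Finset.max_union

lemma degD_neg' (f : S) : R.degD (-f) = R.degD f := by
  have hs : R.supp (-f) = R.supp f := by
    ext m
    rw [R.mem_supp, R.mem_supp, R.coeff_neg', neg_ne_zero]
  show (R.supp (-f)).max = (R.supp f).max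
  rw [hs]

end DiffPolyRing

/-- an upper triangular unimodular `W` with unit diagonal entries `1`
such that `W·H` is again in Hermite form (for `H` in Hermite form of full row rank)
must be the identity. -/
theorem upper_unitriangular_preserving_hermite_is_id
    {F : Type} [Field F] [CharZero F] {S : Type} [Ring S]
    (δ : RatFunc F → RatFunc F)
    (hδadd : ∀ a b : RatFunc F, δ (a + b) = δ a + δ b)
    (hδmul : ∀ a b : RatFunc F, δ (a * b) = a * δ b + δ a * b)
    (R : DiffPolyRing (RatFunc F) S δ) {n : ℕ}
    (W H : Matrix (Fin n) (Fin n) S)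
    (hWtri : ∀ i j, j < i → W i j = 0)
    (hWuni : IsUnit W)
    (hWdiag : ∀ i, W i i = 1)
    (hH : R.HermiteForm H) (hHrank : DiffPolyRing.FullRowRank H)
    (hWH : R.HermiteForm (W * H)) :
    W = 1 := by
  classical
  have key : ∀ m : ℕ, ∀ j : Fin n, (j : ℕ) = m → ∀ i : Fin n, i < j → W i j = 0 := by
    intro m
    induction m using Nat.strong_induction_on with
    | _ m ih =>
      intro j hj i hij
      have hWH_ij : (W * H) i j = H i j + W i j * H j j := by
        rw [Matrix.mul_apply]
        have hterm : ∀ k : Fin n, W i k * H k j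
            = (if k = i then H i j else 0) + (if k = j then W i j * H j j else 0) := by
          intro k
          by_cases hki : k = i
          · subst hki
            rw [if_pos rfl, if_neg (ne_of_lt hij), hWdiag, one_mul, add_zero]
          · by_cases hkj : k = j
            · subst hkj
              rw [if_neg hki, if_pos rfl, zero_add]
            · rw [if_neg hki, if_neg hkj, add_zero]
              rcases lt_or_gt_of_ne hkj with h | h
              · rcases lt_or_gt_of_ne hki with h2 | h2
                · rw [hWtri i k h2, zero_mul]
                · have hklt : (k : ℕ) < m := by
                    have := h
                    rw [Fin.lt_def] at this
                    omega
                  rw [ih (k : ℕ) hklt k rfl i h2, zero_mul]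
              · rw [hH.1 k j h, mul_zero]
        rw [Finset.sum_congr rfl (fun k _ => hterm k), Finset.sum_add_distrib,
          Finset.sum_ite_eq' Finset.univ i, Finset.sum_ite_eq' Finset.univ j,
          if_pos (Finset.mem_univ i), if_pos (Finset.mem_univ j)]
      have hWH_jj : (W * H) j j = H j j := by
        rw [Matrix.mul_apply]
        have hterm : ∀ k : Fin n, W j k * H k j = if k = j then H j j else 0 := by
          intro k
          by_cases hkj : k = j
          · subst hkj; rw [if_pos rfl, hWdiag, one_mul]
          · rw [if_neg hkj]
            rcases lt_or_gt_of_ne hkj with h | h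
            · rw [hWtri j k h, zero_mul]
            · rw [hH.1 k j h, mul_zero]
        rw [Finset.sum_congr rfl (fun k _ => hterm k),
          Finset.sum_ite_eq' Finset.univ j, if_pos (Finset.mem_univ j)]
      by_contra hW0
      have hd1 : R.degD ((W * H) i j) < R.degD ((W * H) j j) := hWH.2.2 i j hij
      rw [hWH_jj] at hd1
      have hd2 : R.degD (H i j) < R.degD (H j j) := hH.2.2 i j hij
      have hdm : R.degD (H j j) ≤ R.degD (W i j * H j j) :=
        R.degD_le_degD_mul_of_monic hW0 (hH.2.1 j)
      have heq : W i j * H j j = (W * H) i j + (-(H i j)) := by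
        rw [hWH_ij]; abel
      have hle : R.degD (W i j * H j j)
          ≤ max (R.degD ((W * H) i j)) (R.degD (-(H i j))) := by
        rw [heq]; exact R.degD_add_le' _ _
      rw [R.degD_neg'] at hle
      exact absurd (lt_of_le_of_lt hdm (lt_of_le_of_lt hle (max_lt hd1 hd2))) (lt_irrefl _)
  ext i j
  rcases lt_trichotomy i j with h | h | h
  · rw [key (j : ℕ) j rfl i h, Matrix.one_apply_ne (ne_of_lt h)]
  · subst h
    rw [hWdiag, Matrix.one_apply_eq]
  · rw [hWtri i j h, Matrix.one_apply_ne (ne_of_gt h)]
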